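/- In ℝ³, the surfaces S_β parametrized by S_β(u,v) = (u³, u + β, v), β ∈ ℝ, have unit normal N(u,v) = (1, −3u², 0)/√(1+9u⁴) (up to sign), and their principal curvatures are κ₁ = 0 and κ₂ = 6u/(1+9u⁴)^{3/2}. In particular, the support function ν = ⟨(1,0,0), N⟩ is everywhere positive while the mean curvature changes sign (it vanishes exactly when u = 0), so the surfaces are not totally geodesic. -/

import Mathlib

open RealInnerProductSpace

/-- Example 4.3 of the paper, corrected: In ℝ³ the surfaces
S_β(u,v) = (u³, u+β, v) have tangent vectors S_u = (3u², 1, 0), S_v = (0,0,1),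
unit normal N(u) = (1, −3u², 0)/√(1+9u⁴), and principal curvatures κ₁ = 0
(in the direction S_v, since S_vv = 0) and κ₂ = ⟨S_uu, N⟩/⟨S_u, S_u⟩
= 6u/(1+9u⁴)^{3/2}.  The support function ν = ⟨(1,0,0), N⟩ is everywhere
positive, while κ₂ vanishes exactly at u = 0 (so the mean curvature changes
sign and the surfaces are not totally geodesic). -/
theorem example_surfaces_not_totally_geodesic
    (S : ℝ → ℝ × ℝ → EuclideanSpace ℝ (Fin 3))
    (hS : ∀ β u v, S β (u, v) = (WithLp.equiv 2 (Fin 3 → ℝ)).symm ![u ^ 3, u + β, v])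
    (Su Suu N : ℝ → EuclideanSpace ℝ (Fin 3)) (Sv ξ : EuclideanSpace ℝ (Fin 3))
    (hSu : ∀ u, Su u = (WithLp.equiv 2 (Fin 3 → ℝ)).symm ![3 * u ^ 2, 1, 0])
    (hSuu : ∀ u, Suu u = (WithLp.equiv 2 (Fin 3 → ℝ)).symm ![6 * u, 0, 0])
    (hSv : Sv = (WithLp.equiv 2 (Fin 3 → ℝ)).symm ![0, 0, 1])
    (hξ : ξ = (WithLp.equiv 2 (Fin 3 → ℝ)).symm ![1, 0, 0])
    (hN : ∀ u, N u = (Real.sqrt (1 + 9 * u ^ 4))⁻¹ •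
      ((WithLp.equiv 2 (Fin 3 → ℝ)).symm ![1, -3 * u ^ 2, 0] : EuclideanSpace ℝ (Fin 3)))
    (κ₂ : ℝ → ℝ) (hκ₂ : ∀ u, κ₂ u = 6 * u / (1 + 9 * u ^ 4) ^ ((3 : ℝ) / 2)) :
    -- S_u and S_v are indeed the partial derivatives of S_β
    (∀ β u v, HasDerivAt (fun t => S β (t, v)) (Su u) u) ∧
    (∀ β u v, HasDerivAt (fun t => S β (u, t)) Sv v) ∧
    (∀ u, HasDerivAt Su (Suu u) u) ∧
    -- N is a unit normal
    (∀ u, ‖N u‖ = 1 ∧ ⟪N u, Su u⟫ = 0 ∧ ⟪N u, Sv⟫ = 0) ∧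
    -- principal curvatures: κ₁ = 0 and κ₂ = ⟨S_uu, N⟩/⟨S_u, S_u⟩
    (∀ u, ⟪(0 : EuclideanSpace ℝ (Fin 3)), N u⟫ = 0 ∧
      ⟪Suu u, N u⟫ / ⟪Su u, Su u⟫ = κ₂ u) ∧
    -- support function everywhere positive
    (∀ u, 0 < ⟪ξ, N u⟫) ∧
    -- κ₂ vanishes exactly at u = 0; the surfaces are not totally geodesic
    (∀ u, κ₂ u = 0 ↔ u = 0) := by
  have hpos : ∀ u : ℝ, (0:ℝ) < 1 + 9 * u ^ 4 := fun u => by positivity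
  have hsq : ∀ u : ℝ, Real.sqrt (1 + 9 * u ^ 4) ^ 2 = 1 + 9 * u ^ 4 := fun u =>
    Real.sq_sqrt (hpos u).le
  have hs : ∀ u : ℝ, 0 < Real.sqrt (1 + 9 * u ^ 4) := fun u => Real.sqrt_pos.2 (hpos u)
  set e := (EuclideanSpace.equiv (Fin 3) ℝ).symm
  have key : ∀ (f : ℝ → Fin 3 → ℝ) (f' : Fin 3 → ℝ) (x : ℝ),
      (∀ i, HasDerivAt (fun t => f t i) (f' i) x) →
      HasDerivAt (fun t => (WithLp.equiv 2 (Fin 3 → ℝ)).symm (f t)) 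
        ((WithLp.equiv 2 (Fin 3 → ℝ)).symm f' : EuclideanSpace ℝ (Fin 3)) x := by
    intro f f' x hf
    exact (e.hasFDerivAt.comp_hasDerivAt x (hasDerivAt_pi.2 hf))
  refine ⟨?_, ?_, ?_, ?_, ?_, ?_, ?_⟩
  · intro β u v
    have := key (fun t => ![t ^ 3, t + β, v]) ![3 * u ^ 2, 1, 0] u ?_
    · convert this using 2 with t
      · rw [hS]
      · rw [hSu]
    · intro i
      fin_cases i
      · simpa using hasDerivAt_pow 3 u
      · simpa using (hasDerivAt_id u).add_const β
      · simpa using hasDerivAt_const u v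
  · intro β u v
    have := key (fun t => ![u ^ 3, u + β, t]) ![0, 0, 1] v ?_
    · convert this using 2 with t <;> first | rw [hS] | rw [hSv]
    · intro i
      fin_cases i
      · simpa using hasDerivAt_const v (u ^ 3)
      · simpa using hasDerivAt_const v (u + β)
      · simpa using hasDerivAt_id' v
  · intro u
    have := key (fun t => ![3 * t ^ 2, 1, 0]) ![6 * u, 0, 0] u ?_
    · convert this using 2 with t
      · rw [hSu]
      · rw [hSuu]
    · intro i
      fin_cases i
      · have h := (hasDerivAt_pow 2 u).const_mul (3:ℝ)
        norm_num at h
        simpa [show (6:ℝ) * u = 3 * (2 * u) by ring] using h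
      · simpa using hasDerivAt_const u (1:ℝ)
      · simpa using hasDerivAt_const u (0:ℝ)
  · intro u
    refine ⟨?_, ?_, ?_⟩
    · rw [hN, norm_smul]
      have : ‖((WithLp.equiv 2 (Fin 3 → ℝ)).symm ![1, -3 * u ^ 2, 0] :
          EuclideanSpace ℝ (Fin 3))‖ = Real.sqrt (1 + 9 * u ^ 4) := by
        rw [EuclideanSpace.norm_eq]
        congr 1
        simp [Fin.sum_univ_three]
        ring
      rw [this]
      simp [abs_of_pos (hs u)]
      exact inv_mul_cancel₀ (hs u).ne'
    · rw [hN, hSu, real_inner_smul_left]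
      simp [PiLp.inner_apply, Fin.sum_univ_three]
      try ring
    · rw [hN, hSv, real_inner_smul_left]
      simp [PiLp.inner_apply, Fin.sum_univ_three]
  · intro u
    constructor
    · simp
    · rw [hN, hSuu, hSu, hκ₂, real_inner_smul_right]
      have h32 : (1 + 9 * u ^ 4 : ℝ) ^ ((3:ℝ)/2) = Real.sqrt (1 + 9 * u ^ 4) ^ 3 := by
        rw [Real.sqrt_eq_rpow, ← Real.rpow_natCast (_ ^ ((1:ℝ)/2)) 3,
          ← Real.rpow_mul (hpos u).le]
        norm_num
      rw [h32]
      simp only [PiLp.inner_apply, WithLp.equiv_symm_apply, PiLp.toLp_apply, Fin.sum_univ_three,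
        RCLike.inner_apply, conj_trivial, Matrix.cons_val_zero, Matrix.cons_val_one,
        Matrix.head_cons, Matrix.cons_val_two, Matrix.tail_cons]
      have h1 : (3 * u ^ 2 * (3 * u ^ 2) + 1 * 1 + 0 * 0 : ℝ) = Real.sqrt (1 + 9 * u ^ 4) ^ 2 := by
        rw [hsq]; ring
      rw [h1]
      rw [div_eq_div_iff (pow_pos (hs u) 2).ne' (pow_pos (hs u) 3).ne']
      field_simp
      ring
  · intro u
    rw [hN, hξ, real_inner_smul_right]
    simp [PiLp.inner_apply, Fin.sum_univ_three]
    positivity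
  · intro u
    rw [hκ₂]
    constructor
    · intro h
      have := div_eq_zero_iff.1 h
      rcases this with h | h
      · linarith [mul_left_cancel₀ (by norm_num : (6:ℝ) ≠ 0) (by linarith : (6:ℝ)*u = 6*0)]
      · exact absurd h (by positivity)
    · intro h; simp [h]
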